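/- Fix a real threshold θ > 0, a positive integer T, and a real input sequence x₁, …, x_T with −θ ≤ x_t ≤ θ for every t. For the inhibitory (PASCAL) integrate-and-fire neuron driven by this sequence, the membrane potential satisfies 0 ≤ v_t < θ for every t ≥ 0, and the accumulated signed spike count over T timesteps is exactly ∑_{t=1}^{T} s_t = ⌊(∑_{t=1}^{T} x_t)/θ + 1/2⌋; i.e., the spiking computation recovers the rounded normalized sum of the (possibly time-varying) input currents. -/

import Mathlib

/-- Signed spike of the inhibitory (PASCAL) IF neuron given total drive `w = v + x`:
`1` if `w ≥ θ`, `-1` if `w < 0`, else `0`. -/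
noncomputable def pSpike (θ w : ℝ) : ℤ :=
  if θ ≤ w then 1 else if w < 0 then -1 else 0

/-- Membrane potential of the inhibitory (PASCAL) integrate-and-fire neuron:
`v 0 = θ/2` and `v (t+1) = v t + x t - θ·s t`, where `x t` is the input at
timestep `t+1` and `s t` is the signed spike. -/
noncomputable def pV (θ : ℝ) (x : ℕ → ℝ) : ℕ → ℝ
  | 0 => θ / 2
  | t + 1 => pV θ x t + x t - θ * (pSpike θ (pV θ x t + x t) : ℝ)

/-- Signed spike emitted at timestep `t+1` (0-indexed `t`). -/
noncomputable def pS (θ : ℝ) (x : ℕ → ℝ) (t : ℕ) : ℤ :=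
  pSpike θ (pV θ x t + x t)

lemma pStep (θ v xv : ℝ) (hθ : 0 < θ) (hv : 0 ≤ v) (hv' : v < θ)
    (hx1 : -θ ≤ xv) (hx2 : xv ≤ θ) :
    0 ≤ v + xv - θ * (pSpike θ (v + xv) : ℝ) ∧
      v + xv - θ * (pSpike θ (v + xv) : ℝ) < θ := by
  unfold pSpike
  split_ifs with h1 h2 <;> push_cast <;> constructor <;> linarith

lemma pV_eq (θ : ℝ) (x : ℕ → ℝ) (t : ℕ) :
    pV θ x t = θ / 2 + ∑ i ∈ Finset.range t, x i
      - θ * ((∑ i ∈ Finset.range t, pS θ x i : ℤ) : ℝ) := by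
  induction t with
  | zero => simp [pV]
  | succ n ih =>
    rw [Finset.sum_range_succ, Finset.sum_range_succ]
    show pV θ x n + x n - θ * (pSpike θ (pV θ x n + x n) : ℝ) = _
    rw [pS]
    push_cast at ih ⊢
    linear_combination ih

/-- For inputs bounded by `|x t| ≤ θ`, the membrane potential of the inhibitory
(PASCAL) IF neuron stays in `[0, θ)`, and the accumulated signed spike count
over `T` timesteps equals `⌊(∑ x t)/θ + 1/2⌋`. -/
theorem pascal_spike_count (θ : ℝ) (hθ : 0 < θ) (T : ℕ) (hT : 0 < T)
    (x : ℕ → ℝ) (hx : ∀ t ∈ Finset.range T, -θ ≤ x t ∧ x t ≤ θ) :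
    (∀ t ≤ T, 0 ≤ pV θ x t ∧ pV θ x t < θ) ∧
    ∑ t ∈ Finset.range T, pS θ x t = ⌊(∑ t ∈ Finset.range T, x t) / θ + 1 / 2⌋ := by
  have key : ∀ t ≤ T, 0 ≤ pV θ x t ∧ pV θ x t < θ := by
    intro t ht
    induction t with
    | zero => constructor <;> simp [pV] <;> linarith
    | succ n ih =>
      have hn := ih (Nat.le_of_succ_le ht)
      have hxn := hx n (Finset.mem_range.mpr (Nat.lt_of_succ_le ht))
      exact pStep θ (pV θ x n) (x n) hθ hn.1 hn.2 hxn.1 hxn.2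
  refine ⟨key, ?_⟩
  have hV := key T le_rfl
  rw [pV_eq] at hV
  set n : ℤ := ∑ t ∈ Finset.range T, pS θ x t
  set S : ℝ := ∑ t ∈ Finset.range T, x t
  symm
  rw [Int.floor_eq_iff]
  have hθ' : θ ≠ 0 := ne_of_gt hθ
  constructor
  · have : (n : ℝ) * θ ≤ S + θ / 2 := by linarith [hV.1]
    have := (div_le_div_iff_of_pos_right hθ).mpr this
    rw [mul_div_cancel_right₀ _ hθ'] at this
    calc (n : ℝ) ≤ (S + θ/2) / θ := this
      _ = S / θ + 1 / 2 := by field_simp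
  · have : S + θ / 2 < ((n : ℝ) + 1) * θ := by nlinarith [hV.2]
    have := (div_lt_div_iff_of_pos_right hθ).mpr this
    rw [mul_div_cancel_right₀ _ hθ'] at this
    calc S / θ + 1 / 2 = (S + θ/2) / θ := by field_simp
      _ < (n : ℝ) + 1 := this
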